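/- For each d ≥ 2 there exist a constant c_d > 0 and a natural number N such that for every n ≥ N and every θ ∈ [0, π], one has (1 − P_{n,d}(cos θ))² ≥ c_d · (2 − 2 P_{n,d}(cos θ) − (P_{n,d}'(cos θ) · sin θ)² / P_{n,d}'(1)). (This is the analytic form of the uniform lower bound on the critical radius of the level-n spherical-harmonic immersion of S^d.) -/

import Mathlib

open Real

/-- The Gegenbauer (ultraspherical) polynomial `C_n^λ`, via its explicit sum
`C_n^λ(x) = Σ_{k=0}^{⌊n/2⌋} (−1)^k Γ(n−k+λ)/(Γ(λ) k! (n−2k)!) (2x)^{n−2k}`. -/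
noncomputable def gegenbauerC (lam : ℝ) (n : ℕ) (x : ℝ) : ℝ :=
  ∑ k ∈ Finset.range (n / 2 + 1),
    (-1) ^ k * Real.Gamma ((n - k : ℕ) + lam) /
        (Real.Gamma lam * (k.factorial : ℝ) * ((n - 2 * k).factorial : ℝ)) *
      (2 * x) ^ (n - 2 * k)

/-- The Legendre polynomial of degree `n` in dimension `d+1`: the Gegenbauer polynomial
`C_n^{((d−1)/2)}` normalized so that its value at `1` is `1`. -/
noncomputable def legendreDim (d n : ℕ) (x : ℝ) : ℝ :=
  gegenbauerC (((d : ℝ) - 1) / 2) n x / gegenbauerC (((d : ℝ) - 1) / 2) n 1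

open Finset

namespace CritRad

noncomputable def gcoef (lam : ℝ) (n k : ℕ) : ℝ :=
  (-1) ^ k * Real.Gamma ((n - k : ℕ) + lam) /
    (Real.Gamma lam * (k.factorial : ℝ) * ((n - 2 * k).factorial : ℝ))

lemma gegen_eq (lam : ℝ) (n : ℕ) (x : ℝ) :
    gegenbauerC lam n x = ∑ k ∈ Finset.range (n / 2 + 1), gcoef lam n k * (2 * x) ^ (n - 2 * k) := rfl

noncomputable def gegenD (lam : ℝ) (n : ℕ) (x : ℝ) : ℝ :=
  ∑ k ∈ Finset.range (n / 2 + 1),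
    gcoef lam n k * (((n - 2 * k : ℕ) : ℝ) * (2 * x) ^ (n - 2 * k - 1) * 2)

noncomputable def gegenDD (lam : ℝ) (n : ℕ) (x : ℝ) : ℝ :=
  ∑ k ∈ Finset.range (n / 2 + 1),
    gcoef lam n k * (((n - 2 * k : ℕ) : ℝ) * (((n - 2 * k - 1 : ℕ) : ℝ) * (2 * x) ^ (n - 2 * k - 1 - 1) * 2) * 2)

lemma hasDerivAt_gegen (lam : ℝ) (n : ℕ) (x : ℝ) :
    HasDerivAt (gegenbauerC lam n) (gegenD lam n x) x := by
  have : HasDerivAt (fun y => ∑ k ∈ Finset.range (n / 2 + 1), gcoef lam n k * (2 * y) ^ (n - 2 * k))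
      (gegenD lam n x) x := by
    apply HasDerivAt.fun_sum
    intro k _
    have h2 : HasDerivAt (fun y : ℝ => 2 * y) 2 x := by
      simpa using (hasDerivAt_id x).const_mul (2:ℝ)
    have hp : HasDerivAt (fun y : ℝ => (2 * y) ^ (n - 2 * k))
        (((n - 2 * k : ℕ) : ℝ) * (2 * x) ^ (n - 2 * k - 1) * 2) x := h2.fun_pow _
    simpa [mul_comm, mul_left_comm, mul_assoc] using hp.const_mul (gcoef lam n k)
  have he : gegenbauerC lam n = fun y => ∑ k ∈ Finset.range (n / 2 + 1), gcoef lam n k * (2 * y) ^ (n - 2 * k) := by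
    funext y; exact gegen_eq lam n y
  rw [he]
  exact this

lemma hasDerivAt_gegenD (lam : ℝ) (n : ℕ) (x : ℝ) :
    HasDerivAt (gegenD lam n) (gegenDD lam n x) x := by
  apply HasDerivAt.fun_sum
  intro k _
  have h2 : HasDerivAt (fun y : ℝ => 2 * y) 2 x := by
    simpa using (hasDerivAt_id x).const_mul (2:ℝ)
  have hp : HasDerivAt (fun y : ℝ => (2 * y) ^ (n - 2 * k - 1))
      (((n - 2 * k - 1 : ℕ) : ℝ) * (2 * x) ^ (n - 2 * k - 1 - 1) * 2) x := h2.fun_pow _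
  have := (hp.const_mul (gcoef lam n k * ((n - 2 * k : ℕ) : ℝ) * 2))
  convert this using 1
  · rfl
  · funext y; ring
  · ring

lemma coef_rec (lam : ℝ) (hlam : 0 < lam) {n j : ℕ} (hj : j < n / 2) :
    gcoef lam n (j+1) * (((j:ℝ)+1) * ((n:ℝ) - ((j:ℝ)+1) + lam))
      = - (gcoef lam n j * (((n:ℝ) - 2*j) * ((n:ℝ) - 2*j - 1))) := by
  have h2 : 2 * (j + 1) ≤ n := by omega
  have e1 : n - (j+1) = n - j - 1 := by omega
  have e2 : (n - j : ℕ) = (n - j - 1) + 1 := by omega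
  have e4 : (n - 2*j : ℕ) = (n - 2*j - 2) + 1 + 1 := by omega
  have e3 : n - 2*(j+1) = n - 2*j - 2 := by omega
  have hpos : (0:ℝ) < ((n-j-1 : ℕ):ℝ) + lam := by positivity
  have hG : Real.Gamma (((n - j : ℕ):ℝ) + lam)
      = (((n-j-1 : ℕ):ℝ) + lam) * Real.Gamma (((n-j-1:ℕ):ℝ) + lam) := by
    rw [e2]
    push_cast
    rw [show ((n-j-1:ℕ):ℝ) + 1 + lam = (((n-j-1:ℕ):ℝ) + lam) + 1 by ring,
      Real.Gamma_add_one (ne_of_gt hpos)]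
  have hGlam : Real.Gamma lam ≠ 0 := ne_of_gt (Real.Gamma_pos_of_pos hlam)
  have c1 : ((n - j - 1 : ℕ) : ℝ) = (n:ℝ) - (j:ℝ) - 1 := by
    rw [Nat.cast_sub (by omega : 1 ≤ n - j), Nat.cast_sub (by omega : j ≤ n)]; push_cast; ring
  have c2 : ((n - 2*j - 2 : ℕ) : ℝ) = (n:ℝ) - 2*(j:ℝ) - 2 := by
    rw [Nat.cast_sub (by omega : 2 ≤ n - 2*j), Nat.cast_sub (by omega : 2*j ≤ n)]; push_cast; ring
  have fact1 : (((n-2*j).factorial : ℕ):ℝ)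
      = ((((n-2*j-2:ℕ)):ℝ)+2) * ((((n-2*j-2:ℕ)):ℝ)+1) * (((n-2*j-2).factorial : ℕ):ℝ) := by
    rw [e4, Nat.factorial_succ, Nat.factorial_succ]; push_cast; ring
  have fact2 : (((j+1).factorial : ℕ):ℝ) = ((j:ℝ)+1) * ((j.factorial : ℕ):ℝ) := by
    rw [Nat.factorial_succ]; push_cast; ring
  have hfj : ((j.factorial : ℕ):ℝ) ≠ 0 := by positivity
  have hfj1 : (((j+1).factorial : ℕ):ℝ) ≠ 0 := by positivity
  have hfn : (((n-2*j-2).factorial : ℕ):ℝ) ≠ 0 := by positivity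
  have hfn2 : (((n-2*j).factorial : ℕ):ℝ) ≠ 0 := by positivity
  unfold gcoef
  rw [e1, e3, hG]
  rw [div_mul_eq_mul_div, div_mul_eq_mul_div]
  rw [← neg_div]
  rw [div_eq_div_iff (by exact mul_ne_zero (mul_ne_zero hGlam hfj1) hfn)
    (by exact mul_ne_zero (mul_ne_zero hGlam hfj) hfn2)]
  rw [fact1, fact2, c1, c2, pow_succ]
  ring

lemma ode_term (lam : ℝ) (n k : ℕ) (hk : k ≤ n / 2) (x : ℝ) :
    (1 - x^2) * (gcoef lam n k * (((n - 2*k : ℕ):ℝ) * (((n - 2*k - 1 : ℕ):ℝ) * (2*x)^(n - 2*k - 1 - 1) * 2) * 2))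
      - (2*lam + 1) * x * (gcoef lam n k * (((n - 2*k : ℕ):ℝ) * (2*x)^(n - 2*k - 1) * 2))
      + ((n:ℝ) * ((n:ℝ) + 2*lam)) * (gcoef lam n k * (2*x)^(n - 2*k))
    = gcoef lam n k * (4 * ((n - 2*k : ℕ):ℝ) * ((n - 2*k - 1 : ℕ):ℝ) * (2*x)^(n - 2*k - 2))
      + gcoef lam n k * (4 * (k:ℝ) * ((n:ℝ) - (k:ℝ) + lam)) * (2*x)^(n - 2*k) := by
  rcases Nat.lt_or_ge (n - 2*k) 2 with hm | hm
  · rcases (by omega : n - 2*k = 0 ∨ n - 2*k = 1) with h0 | h1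
    · have hn : (n:ℝ) = 2*(k:ℝ) := by
        have : n = 2*k := by
          have := Nat.div_mul_le_self n 2
          omega
        rw [this]; push_cast; ring
      rw [h0]
      simp only [Nat.cast_zero, pow_zero]
      rw [hn]; ring
    · have hn : (n:ℝ) = 2*(k:ℝ) + 1 := by
        have : n = 2*k + 1 := by
          have := Nat.div_mul_le_self n 2
          omega
        rw [this]; push_cast; ring
      rw [h1]
      simp only [Nat.cast_one, Nat.cast_zero, pow_zero, pow_one]
      norm_num
      rw [hn]; ring
  · obtain ⟨p, hp⟩ : ∃ p, n - 2*k = p + 2 := ⟨n - 2*k - 2, by omega⟩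
    have h2k : 2*k ≤ n := by omega
    have cm : ((n - 2*k : ℕ):ℝ) = (n:ℝ) - 2*(k:ℝ) := by
      rw [Nat.cast_sub h2k]; push_cast; ring
    have cm1 : ((n - 2*k - 1 : ℕ):ℝ) = (n:ℝ) - 2*(k:ℝ) - 1 := by
      rw [Nat.cast_sub (by omega : 1 ≤ n - 2*k), cm]
      push_cast; ring
    rw [cm, cm1]
    rw [show n - 2*k - 1 - 1 = p from by omega, show n - 2*k - 2 = p from by omega,
      show n - 2*k - 1 = p + 1 from by omega, hp]
    rw [pow_succ, pow_succ, pow_succ]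
    ring

lemma gegen_ode (lam : ℝ) (hlam : 0 < lam) (n : ℕ) (x : ℝ) :
    (1 - x^2) * gegenDD lam n x - (2*lam+1) * x * gegenD lam n x
      + ((n:ℝ) * ((n:ℝ) + 2*lam)) * gegenbauerC lam n x = 0 := by
  rw [gegen_eq, gegenD, gegenDD]
  rw [Finset.mul_sum, Finset.mul_sum, Finset.mul_sum]
  rw [← Finset.sum_sub_distrib, ← Finset.sum_add_distrib]
  rw [Finset.sum_congr rfl (fun k hk => ode_term lam n k (by
    have := Finset.mem_range.mp hk; omega) x)]
  rw [Finset.sum_add_distrib]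
  have hA : ∑ k ∈ Finset.range (n/2 + 1),
      gcoef lam n k * (4 * ((n - 2*k : ℕ):ℝ) * ((n - 2*k - 1 : ℕ):ℝ) * (2*x)^(n - 2*k - 2))
      = ∑ j ∈ Finset.range (n/2),
      gcoef lam n j * (4 * ((n - 2*j : ℕ):ℝ) * ((n - 2*j - 1 : ℕ):ℝ) * (2*x)^(n - 2*j - 2)) := by
    rw [Finset.sum_range_succ]
    have hz : ((n - 2*(n/2) : ℕ):ℝ) * ((n - 2*(n/2) - 1 : ℕ):ℝ) = 0 := by
      rcases (by omega : n - 2*(n/2) = 0 ∨ n - 2*(n/2) = 1) with h | h <;> rw [h] <;> norm_num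
    have : gcoef lam n (n/2) * (4 * ((n - 2*(n/2) : ℕ):ℝ) * ((n - 2*(n/2) - 1 : ℕ):ℝ) * (2*x)^(n - 2*(n/2) - 2)) = 0 := by
      rw [show (4 : ℝ) * ((n - 2*(n/2) : ℕ):ℝ) * ((n - 2*(n/2) - 1 : ℕ):ℝ)
        = 4 * (((n - 2*(n/2) : ℕ):ℝ) * ((n - 2*(n/2) - 1 : ℕ):ℝ)) from by ring, hz]
      ring
    rw [this, add_zero]
  have hB : ∑ k ∈ Finset.range (n/2 + 1),
      gcoef lam n k * (4 * (k:ℝ) * ((n:ℝ) - (k:ℝ) + lam)) * (2*x)^(n - 2*k)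
      = ∑ j ∈ Finset.range (n/2),
      gcoef lam n (j+1) * (4 * ((j:ℝ)+1) * ((n:ℝ) - ((j:ℝ)+1) + lam)) * (2*x)^(n - 2*(j+1)) := by
    rw [Finset.sum_range_succ']
    norm_num
  rw [hA, hB, ← Finset.sum_add_distrib]
  apply Finset.sum_eq_zero
  intro j hj
  have hj' : j < n / 2 := Finset.mem_range.mp hj
  have h2 : 2*j + 2 ≤ n := by omega
  have cm : ((n - 2*j : ℕ):ℝ) = (n:ℝ) - 2*(j:ℝ) := by
    rw [Nat.cast_sub (by omega : 2*j ≤ n)]; push_cast; ring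
  have cm1 : ((n - 2*j - 1 : ℕ):ℝ) = (n:ℝ) - 2*(j:ℝ) - 1 := by
    rw [Nat.cast_sub (by omega : 1 ≤ n - 2*j), cm]; push_cast; ring
  have he : n - 2*(j+1) = n - 2*j - 2 := by omega
  rw [cm, cm1, he]
  have key := coef_rec lam hlam hj'
  linear_combination (4 * (2*x)^(n - 2*j - 2)) * key



lemma mono_of_hasDerivOn {f f' : ℝ → ℝ} {a b : ℝ} (hcont : ContinuousOn f (Set.Icc a b))
    (hf : ∀ x ∈ Set.Ioo a b, HasDerivAt f (f' x) x)
    (h : ∀ x ∈ Set.Ioo a b, 0 ≤ f' x) : MonotoneOn f (Set.Icc a b) := by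
  apply monotoneOn_of_deriv_nonneg (convex_Icc a b) hcont
  · intro x hx; rw [interior_Icc] at hx
    exact ((hf x hx).differentiableAt.differentiableWithinAt)
  · intro x hx; rw [interior_Icc] at hx
    rw [(hf x hx).deriv]; exact h x hx

lemma anti_of_hasDerivOn {f f' : ℝ → ℝ} {a b : ℝ} (hcont : ContinuousOn f (Set.Icc a b))
    (hf : ∀ x ∈ Set.Ioo a b, HasDerivAt f (f' x) x)
    (h : ∀ x ∈ Set.Ioo a b, f' x ≤ 0) : AntitoneOn f (Set.Icc a b) := by
  apply antitoneOn_of_deriv_nonpos (convex_Icc a b) hcont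
  · intro x hx; rw [interior_Icc] at hx
    exact ((hf x hx).differentiableAt.differentiableWithinAt)
  · intro x hx; rw [interior_Icc] at hx
    rw [(hf x hx).deriv]; exact h x hx

structure Setup (P P' P'' : ℝ → ℝ) (D L : ℝ) : Prop where
  hD : 2 ≤ D
  hL : 1 ≤ L
  hP : ∀ x, HasDerivAt P (P' x) x
  hP' : ∀ x, HasDerivAt P' (P'' x) x
  ode : ∀ x, (1 - x^2) * P'' x = D * x * P' x - D * L * P x
  hP1 : P 1 = 1

namespace Setup

variable {P P' P'' : ℝ → ℝ} {D L : ℝ} (S : Setup P P' P'' D L)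

include S

lemma hL0 : 0 < L := lt_of_lt_of_le one_pos S.hL
lemma hD0 : 0 < D := lt_of_lt_of_le two_pos S.hD
lemma contP : Continuous P := continuous_iff_continuousAt.mpr fun x => (S.hP x).continuousAt
lemma contP' : Continuous P' := continuous_iff_continuousAt.mpr fun x => (S.hP' x).continuousAt

/-- Energy. -/
noncomputable def E (x : ℝ) : ℝ := (1 - x^2) * (P' x)^2 + D * L * (P x)^2

omit S in
lemma E_def (x : ℝ) : E (P := P) (P' := P') (D := D) (L := L) x
    = (1 - x^2) * (P' x)^2 + D * L * (P x)^2 := rfl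

lemma hE (x : ℝ) : HasDerivAt (E (P := P) (P' := P') (D := D) (L := L))
    (2*(D-1)*x*(P' x)^2) x := by
  have h1 : HasDerivAt (fun y : ℝ => 1 - y^2) (-(2*x)) x := by
    simpa using ((hasDerivAt_pow 2 x).const_sub 1)
  have h2 : HasDerivAt (fun y => (P' y)^2) (2 * P' x * P'' x) x := by
    simpa using (S.hP' x).fun_pow 2
  have h3 : HasDerivAt (fun y => (P y)^2) (2 * P x * P' x) x := by
    simpa using (S.hP x).fun_pow 2
  have h4 := (h1.mul h2).add (h3.const_mul (D*L))
  have heq : -(2*x) * (P' x)^2 + (1 - x^2) * (2 * P' x * P'' x) + D*L*(2 * P x * P' x)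
      = 2*(D-1)*x*(P' x)^2 := by
    have hode := S.ode x
    linear_combination 2 * P' x * hode
  rw [heq] at h4
  exact h4

lemma Emono : MonotoneOn (E (P := P) (P' := P') (D := D) (L := L)) (Set.Icc 0 1) := by
  apply mono_of_hasDerivOn
  · exact Continuous.continuousOn (continuous_iff_continuousAt.mpr fun x => (S.hE x).continuousAt)
  · exact fun x _ => S.hE x
  · intro x hx
    have : (0:ℝ) ≤ x := le_of_lt hx.1
    have h1 : (0:ℝ) ≤ D - 1 := by linarith [S.hD]
    positivity

lemma E1 : E (P := P) (P' := P') (D := D) (L := L) 1 = D * L := by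
  rw [E_def, S.hP1]; ring

lemma Ebound {x : ℝ} (hx : x ∈ Set.Icc (0:ℝ) 1) :
    E (P := P) (P' := P') (D := D) (L := L) x ≤ D * L := by
  have := S.Emono hx (by constructor <;> norm_num : (1:ℝ) ∈ Set.Icc (0:ℝ) 1) hx.2
  rw [S.E1] at this; exact this

lemma Psq_le {x : ℝ} (hx : x ∈ Set.Icc (0:ℝ) 1) : (P x)^2 ≤ 1 := by
  have h1 := S.Ebound hx
  rw [E_def] at h1
  have h2 : 0 ≤ (1 - x^2) * (P' x)^2 := by
    have : x ^ 2 ≤ 1 := by nlinarith [hx.1, hx.2]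
    nlinarith [sq_nonneg (P' x)]
  have hDL : 0 < D * L := mul_pos S.hD0 S.hL0
  nlinarith

lemma Ple {x : ℝ} (hx : x ∈ Set.Icc (0:ℝ) 1) : P x ≤ 1 := by
  nlinarith [S.Psq_le hx]

lemma PD1 : P' 1 = L := by
  have h := S.ode 1
  rw [S.hP1] at h
  have h3 : (0:ℝ) = D * 1 * P' 1 - D * L * 1 := by rw [← h]; norm_num
  have h4 : D * (P' 1 - L) = 0 := by linarith
  rcases mul_eq_zero.mp h4 with h5 | h5
  · exact absurd h5 (ne_of_gt S.hD0)
  · linarith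


omit S in
lemma rpow_phi_pos {x : ℝ} (hx : x < 1) (hx' : -1 < x) (p : ℝ) : 0 < (1 - x^2) ^ p :=
  Real.rpow_pos_of_pos (by nlinarith) p

omit S in
lemma hb_pos {x : ℝ} (hx0 : 0 < x) (hx1 : x < 1) : (0:ℝ) < 1 - x^2 := by nlinarith

omit S in
lemma hasDerivAt_base (x : ℝ) : HasDerivAt (fun y : ℝ => 1 - y^2) (-(2*x)) x := by
  simpa using ((hasDerivAt_pow 2 x).const_sub 1)

omit S in
lemma hasDerivAt_phi {x : ℝ} (hb : (1:ℝ) - x^2 ≠ 0 ∨ 1 ≤ D/2) :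
    HasDerivAt (fun y : ℝ => (1-y^2) ^ (D/2)) ((D/2) * (1-x^2)^(D/2-1) * (-(2*x))) x := by
  have h2 := Real.hasDerivAt_rpow_const (x := 1-x^2) (p := D/2) hb
  have := h2.comp x (hasDerivAt_base x)
  simpa [Function.comp_def] using this

omit S in
lemma phi_split {x : ℝ} (hb : (0:ℝ) < 1 - x^2) :
    (1-x^2) ^ (D/2) = (1-x^2) * (1-x^2)^(D/2-1) := by
  have h := Real.rpow_add hb 1 (D/2 - 1)
  rw [Real.rpow_one] at h
  rw [show (1:ℝ) + (D/2 - 1) = D/2 by ring] at h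
  exact h

lemma hP2 {x : ℝ} (hb : (1:ℝ) - x^2 ≠ 0) :
    P'' x = (D * x * P' x - D * L * P x)/(1-x^2) := by
  rw [eq_div_iff hb]
  linarith [S.ode x]

lemma hNderiv {x : ℝ} (hx0 : 0 < x) (hx1 : x < 1) :
    HasDerivAt (fun y => (L - y * P' y) * ((1-y^2) ^ (D/2)) / y)
      (D*L*(P x - 1)*((1-x^2)^(D/2-1)) - L*((1-x^2)^(D/2))/x^2) x := by
  have hb : (0:ℝ) < 1 - x^2 := hb_pos hx0 hx1
  have hrp := hasDerivAt_phi (D := D) (x := x) (Or.inl (ne_of_gt hb))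
  have hq : HasDerivAt (fun y => L - y * P' y) (-(P' x + x * P'' x)) x := by
    have h0 := ((hasDerivAt_id x).mul (S.hP' x)).const_sub L
    simpa [mul_comm] using h0
  have hprod := hq.fun_mul hrp
  have hdiv := hprod.fun_div (hasDerivAt_id x) (ne_of_gt hx0)
  convert hdiv using 1
  · rfl
  · rfl
  · rfl
  simp only [id]
  rw [S.hP2 (ne_of_gt hb), phi_split hb]
  have hsp : (0:ℝ) < (1-x^2)^(D/2-1) := Real.rpow_pos_of_pos hb _
  field_simp
  ring

omit S in
lemma crp (hD2 : (0:ℝ) < D/2) : Continuous (fun y : ℝ => (1-y^2) ^ (D/2)) := by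
  apply continuous_iff_continuousAt.mpr
  intro y
  have hf : ContinuousAt (fun y : ℝ => 1 - y^2) y := by fun_prop
  apply ContinuousAt.rpow_const hf
  rcases eq_or_ne (1 - y^2) 0 with h | h
  · exact Or.inr (le_of_lt hD2)
  · exact Or.inl h

lemma xPD_le {x : ℝ} (hx0 : 0 < x) (hx1 : x ≤ 1) : x * P' x ≤ L := by
  rcases eq_or_lt_of_le hx1 with rfl | hx1
  · rw [S.PD1]; linarith [S.hL0]
  · have hDpos := S.hD0
    have hD2 : (0:ℝ) < D/2 := by linarith
    set Nf : ℝ → ℝ := fun y => (L - y * P' y) * ((1-y^2) ^ (D/2)) / y with hNf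
    have hcont : ContinuousOn Nf (Set.Icc x 1) := by
      apply ContinuousOn.div
      · exact (((continuous_const.sub ((continuous_id.mul S.contP')))).mul
          (crp (D := D) hD2)).continuousOn
      · exact continuous_id.continuousOn
      · intro y hy; exact ne_of_gt (lt_of_lt_of_le hx0 hy.1)
    have hanti : AntitoneOn Nf (Set.Icc x 1) := by
      apply anti_of_hasDerivOn (f' := fun y =>
          D*L*(P y - 1)*((1-y^2)^(D/2-1)) - L*((1-y^2)^(D/2))/y^2) hcont
      · intro y hy
        exact S.hNderiv (lt_trans hx0 hy.1) hy.2
      · intro y hy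
        have hy0 : 0 < y := lt_trans hx0 hy.1
        have hb : (0:ℝ) < 1 - y^2 := hb_pos hy0 hy.2
        have h1 : P y ≤ 1 := S.Ple ⟨le_of_lt hy0, le_of_lt hy.2⟩
        have h2 : (0:ℝ) < (1-y^2)^(D/2-1) := Real.rpow_pos_of_pos hb _
        have h3 : (0:ℝ) < (1-y^2)^(D/2) := Real.rpow_pos_of_pos hb _
        have h4 : 0 < D * L := mul_pos S.hD0 S.hL0
        have h5 : D*L*(P y - 1)*((1-y^2)^(D/2-1)) ≤ 0 := by
          apply mul_nonpos_of_nonpos_of_nonneg _ (le_of_lt h2)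
          nlinarith
        have h6 : 0 ≤ L*((1-y^2)^(D/2))/y^2 :=
          div_nonneg (mul_nonneg (by linarith [S.hL0]) (le_of_lt h3)) (sq_nonneg y)
        linarith
    have hN1 : Nf 1 = 0 := by
      rw [hNf]
      show (L - 1 * P' 1) * ((1-(1:ℝ)^2) ^ (D/2)) / 1 = 0
      rw [show (1-(1:ℝ)^2) = 0 by norm_num, Real.zero_rpow (ne_of_gt hD2)]
      ring
    have hNx : 0 ≤ Nf x := by
      have := hanti (Set.left_mem_Icc.mpr (le_of_lt hx1)) (Set.right_mem_Icc.mpr (le_of_lt hx1)) (le_of_lt hx1)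
      rw [hN1] at this; exact this
    have hb : (0:ℝ) < 1 - x^2 := hb_pos hx0 hx1
    have hphi : (0:ℝ) < (1-x^2)^(D/2) := Real.rpow_pos_of_pos hb _
    by_contra hcon
    push_neg at hcon
    have : Nf x < 0 := by
      simp only [hNf]
      apply div_neg_of_neg_of_pos _ hx0
      apply mul_neg_of_neg_of_pos _ hphi
      linarith
    linarith


omit S in
lemma xa_le_one' (hL : 1 ≤ L) : (1:ℝ) - 1/(4*L) ≤ 1 := by
  have : (0:ℝ) < 1/(4*L) := div_pos one_pos (by linarith)
  linarith

lemma Pge_half {x : ℝ} (hx : 1 - 1/(4*L) ≤ x) (hx1 : x ≤ 1) : 1/2 ≤ P x := by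
  have hL0 := S.hL0
  have hxa : (3:ℝ)/4 ≤ 1 - 1/(4*L) := by
    have h1 : 1/(4*L) ≤ 1/4 := by
      rw [div_le_div_iff₀ (by linarith) (by norm_num)]
      linarith [S.hL]
    linarith
  have hganti : AntitoneOn (fun y => P y - 2*L*y) (Set.Icc (1/2 : ℝ) 1) := by
    apply anti_of_hasDerivOn (f' := fun y => P' y - 2*L)
    · exact (S.contP.sub (continuous_const.mul continuous_id)).continuousOn
    · intro y _
      exact (S.hP y).sub (by simpa using (hasDerivAt_id y).const_mul (2*L))
    · intro y hy
      have hy0 : (0:ℝ) < y := by linarith [hy.1]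
      have h1 : y * P' y ≤ L := S.xPD_le hy0 (le_of_lt hy.2)
      have h2 : P' y ≤ L / y := by
        rw [le_div_iff₀ hy0]; linarith [h1, mul_comm (P' y) y]
      have h3 : L / y ≤ 2*L := by
        rw [div_le_iff₀ hy0]; nlinarith [hy.1]
      linarith
  have hmem1 : x ∈ Set.Icc (1/2 : ℝ) 1 := ⟨by linarith, hx1⟩
  have hmem2 : (1:ℝ) ∈ Set.Icc (1/2 : ℝ) 1 := ⟨by norm_num, le_refl 1⟩
  have := hganti hmem1 hmem2 hx1
  simp only at this
  rw [S.hP1] at this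
  have hxr : 1 - x ≤ 1/(4*L) := by linarith
  have : P x ≥ 1 - 2*L*(1-x) := by linarith
  have h4 : 2*L*(1-x) ≤ 2*L*(1/(4*L)) := by
    apply mul_le_mul_of_nonneg_left hxr (by linarith)
  have h5 : 2*L*(1/(4*L)) = 1/2 := by field_simp; ring
  linarith

lemma PD_ge {x : ℝ} (hx : 1 - 1/(4*L) ≤ x) (hx1 : x ≤ 1) : L/2 ≤ P' x := by
  have hL0 := S.hL0
  have hD0 := S.hD0
  have hD2 : (0:ℝ) < D/2 := by linarith
  have hD21 : (1:ℝ) ≤ D/2 := by linarith [S.hD]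
  rcases eq_or_lt_of_le hx1 with rfl | hx1
  · rw [S.PD1]; linarith
  · have hxa3 : (3:ℝ)/4 ≤ 1 - 1/(4*L) := by
      have h1 : 1/(4*L) ≤ 1/4 := by
        rw [div_le_div_iff₀ (by linarith) (by norm_num)]
        linarith [S.hL]
      linarith
    set Z : ℝ → ℝ := fun y => (P' y - L/2) * ((1-y^2) ^ (D/2)) with hZ
    have hZanti : AntitoneOn Z (Set.Icc (1 - 1/(4*L)) 1) := by
      apply anti_of_hasDerivOn (f' := fun y =>
        D*L*((1-y^2)^(D/2-1))*(y/2 - P y))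
      · exact ((S.contP'.sub continuous_const).mul (crp (D := D) hD2)).continuousOn
      · intro y hy
        have hb : (0:ℝ) < 1 - y^2 := hb_pos (by linarith [hy.1]) hy.2
        have h1 := ((S.hP' y).sub_const (L/2)).fun_mul
          (hasDerivAt_phi (D := D) (x := y) (Or.inl (ne_of_gt hb)))
        convert h1 using 1
        · rfl
        · rfl
        rw [S.hP2 (ne_of_gt hb), phi_split hb]
        field_simp
        ring
      · intro y hy
        have hb : (0:ℝ) < 1 - y^2 := hb_pos (by linarith [hy.1]) hy.2
        have h2 : (0:ℝ) < (1-y^2)^(D/2-1) := Real.rpow_pos_of_pos hb _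
        have h3 : 1/2 ≤ P y := S.Pge_half (le_of_lt hy.1) (le_of_lt hy.2)
        have h4 : y/2 - P y ≤ 0 := by linarith [hy.2]
        have h5 : 0 < D * L := mul_pos hD0 hL0
        have h6 : 0 ≤ D * L * ((1-y^2)^(D/2-1)) := le_of_lt (mul_pos h5 h2)
        have h7 := mul_le_mul_of_nonneg_left h4 h6
        simpa using h7
    have hZ1 : Z 1 = 0 := by
      rw [hZ]
      show (P' 1 - L/2) * ((1-(1:ℝ)^2) ^ (D/2)) = 0
      rw [show (1-(1:ℝ)^2) = 0 by norm_num, Real.zero_rpow (ne_of_gt hD2)]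
      ring
    have hmem1 : x ∈ Set.Icc (1 - 1/(4*L)) 1 := ⟨hx, le_of_lt hx1⟩
    have hmem2 : (1:ℝ) ∈ Set.Icc (1 - 1/(4*L)) 1 := ⟨xa_le_one' S.hL, le_refl 1⟩
    have hZx : 0 ≤ Z x := by
      have := hZanti hmem1 hmem2 (le_of_lt hx1)
      rw [hZ1] at this; exact this
    have hb : (0:ℝ) < 1 - x^2 := hb_pos (by linarith) hx1
    have hphi : (0:ℝ) < (1-x^2)^(D/2) := Real.rpow_pos_of_pos hb _
    rw [hZ] at hZx
    simp only at hZx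
    nlinarith

lemma Edrop : E (P := P) (P' := P') (D := D) (L := L) (1 - 1/(4*L)) ≤ D*L*(1 - 1/32) := by
  have hL0 := S.hL0
  have hD0 := S.hD0
  have hxa3 : (3:ℝ)/4 ≤ 1 - 1/(4*L) := by
    have h1 : 1/(4*L) ≤ 1/4 := by
      rw [div_le_div_iff₀ (by linarith) (by norm_num)]
      linarith [S.hL]
    linarith
  have hYmono : MonotoneOn (fun y => E (P := P) (P' := P') (D := D) (L := L) y - ((D-1)*L^2/4)*y)
      (Set.Icc (1 - 1/(4*L)) 1) := by
    apply mono_of_hasDerivOn (f' := fun y => 2*(D-1)*y*(P' y)^2 - (D-1)*L^2/4)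
    · apply ContinuousOn.sub _ (continuous_const.mul continuous_id).continuousOn
      exact (Continuous.continuousOn (continuous_iff_continuousAt.mpr
        fun y => (S.hE y).continuousAt))
    · intro y _
      exact (S.hE y).sub (by simpa using (hasDerivAt_id y).const_mul ((D-1)*L^2/4))
    · intro y hy
      have h1 : L/2 ≤ P' y := S.PD_ge (le_of_lt hy.1) (le_of_lt hy.2)
      have h2 : (1:ℝ)/2 ≤ y := by linarith [hy.1]
      have hD1 : (0:ℝ) ≤ D - 1 := by linarith [S.hD]
      nlinarith [mul_nonneg (mul_nonneg hD1 (by linarith : (0:ℝ) ≤ y - 1/2)) (sq_nonneg (P' y)),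
        mul_nonneg hD1 (mul_nonneg (by linarith : (0:ℝ) ≤ P' y - L/2) (by linarith : (0:ℝ) ≤ P' y + L/2))]
  have hmem1 : (1 - 1/(4*L)) ∈ Set.Icc (1 - 1/(4*L)) 1 := ⟨le_refl _, xa_le_one' S.hL⟩
  have hmem2 : (1:ℝ) ∈ Set.Icc (1 - 1/(4*L)) 1 := ⟨xa_le_one' S.hL, le_refl 1⟩
  have := hYmono hmem1 hmem2 (xa_le_one' S.hL)
  simp only at this
  rw [S.E1] at this
  have hxa1 : (1:ℝ) - (1 - 1/(4*L)) = 1/(4*L) := by ring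
  have key : E (P := P) (P' := P') (D := D) (L := L) (1 - 1/(4*L)) ≤ D*L - (D-1)*L^2/4 * (1 - (1 - 1/(4*L))) := by
    linarith
  rw [hxa1] at key
  have h6 : (D-1)*L^2/4 * (1/(4*L)) = (D-1)*L/16 := by
    field_simp; ring
  rw [h6] at key
  have h7 : D*L/32 ≤ (D-1)*L/16 := by nlinarith [S.hD]
  linarith

lemma Psmall {x : ℝ} (hx0 : 0 ≤ x) (hxa : x ≤ 1 - 1/(4*L)) : (P x)^2 ≤ 1 - 1/32 := by
  have hL0 := S.hL0
  have hD0 := S.hD0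
  have hxa3 : (3:ℝ)/4 ≤ 1 - 1/(4*L) := by
    have h1 : 1/(4*L) ≤ 1/4 := by
      rw [div_le_div_iff₀ (by linarith) (by norm_num)]
      linarith [S.hL]
    linarith
  have hxa1 : 1 - 1/(4*L) ≤ 1 := by
    have : 0 < 1/(4*L) := by positivity
    linarith
  have hx1 : x ≤ 1 := le_trans hxa hxa1
  have hmono := S.Emono ⟨hx0, hx1⟩ ⟨by linarith, hxa1⟩ hxa
  have hdrop := S.Edrop
  have hE := le_trans hmono hdrop
  rw [E_def] at hE
  have h2 : 0 ≤ (1 - x^2) * (P' x)^2 :=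
    mul_nonneg (by nlinarith) (sq_nonneg (P' x))
  have hDL : 0 < D * L := mul_pos hD0 hL0
  nlinarith

lemma hAderiv (K : ℝ) (x : ℝ) :
    HasDerivAt (fun y => (1-y^2)*(P' y)^2/L - 2*(1-P y) + K*(1-P y)^2)
      (2*(P' x)*((D-1)*x*(P' x)/L + 1 - D*(P x) - K*(1-P x))) x := by
  have h2 : HasDerivAt (fun y => (P' y)^2) (2 * P' x * P'' x) x := by
    simpa using (S.hP' x).fun_pow 2
  have t1 := ((hasDerivAt_base x).fun_mul h2).div_const L
  have t2 : HasDerivAt (fun y => 1 - P y) (-(P' x)) x := (S.hP x).const_sub 1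
  have t3 : HasDerivAt (fun y => (1-P y)^2) (2*(1-P x)*(-(P' x))) x := by
    simpa using t2.fun_pow 2
  have t4 := (t1.fun_sub (t2.const_mul 2)).fun_add (t3.const_mul K)
  convert t4 using 1
  · rfl
  · rfl
  have hode := S.ode x
  have hL0 := S.hL0
  field_simp
  linear_combination (-P' x) * hode

lemma Acore {K : ℝ} (hKD : D ≤ K) {x : ℝ} (hx : 1 - 1/(4*L) ≤ x) (hx1 : x ≤ 1) :
    0 ≤ (1-x^2)*(P' x)^2/L - 2*(1-P x) + K*(1-P x)^2 := by
  have hL0 := S.hL0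
  have hD0 := S.hD0
  have hxa3 : (3:ℝ)/4 ≤ 1 - 1/(4*L) := by
    have h1 : 1/(4*L) ≤ 1/4 := by
      rw [div_le_div_iff₀ (by linarith) (by norm_num)]
      linarith [S.hL]
    linarith
  have hAanti : AntitoneOn (fun y => (1-y^2)*(P' y)^2/L - 2*(1-P y) + K*(1-P y)^2)
      (Set.Icc (1 - 1/(4*L)) 1) := by
    apply anti_of_hasDerivOn (f' := fun y =>
      2*(P' y)*((D-1)*y*(P' y)/L + 1 - D*(P y) - K*(1-P y)))
    · apply ContinuousOn.add
      apply ContinuousOn.sub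
      · exact (((continuous_const.sub (continuous_pow 2)).mul (S.contP'.pow 2)).div_const L).continuousOn
      · exact (continuous_const.mul (continuous_const.sub S.contP)).continuousOn
      · exact (continuous_const.mul ((continuous_const.sub S.contP).pow 2)).continuousOn
    · intro y _
      exact S.hAderiv K y
    · intro y hy
      have hy0 : (0:ℝ) < y := by linarith [hy.1]
      have hy1 : y ≤ 1 := le_of_lt hy.2
      have hPD : L/2 ≤ P' y := S.PD_ge (le_of_lt hy.1) hy1
      have hPD0 : 0 ≤ P' y := by linarith
      have hxP : y * P' y ≤ L := S.xPD_le hy0 hy1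
      have hP1' : P y ≤ 1 := S.Ple ⟨le_of_lt hy0, hy1⟩
      have hbr : (D-1)*y*(P' y)/L + 1 - D*(P y) - K*(1-P y) ≤ 0 := by
        have hD1 : (0:ℝ) ≤ D - 1 := by linarith [S.hD]
        have h1 : (D-1)*y*(P' y)/L ≤ D - 1 := by
          rw [div_le_iff₀ hL0]
          nlinarith
        nlinarith
      nlinarith
  have hmem1 : x ∈ Set.Icc (1 - 1/(4*L)) 1 := ⟨hx, hx1⟩
  have hmem2 : (1:ℝ) ∈ Set.Icc (1 - 1/(4*L)) 1 := ⟨xa_le_one' S.hL, le_refl 1⟩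
  have hle := hAanti hmem1 hmem2 hx1
  have hA1 : (1-(1:ℝ)^2)*(P' 1)^2/L - 2*(1-P 1) + K*(1-P 1)^2 = 0 := by
    rw [S.hP1]; norm_num
  simp only at hle
  rw [hA1] at hle
  exact hle

lemma main_nonneg {K : ℝ} (hKD : D ≤ K) (hK : 128 ≤ K) {x : ℝ}
    (hx0 : 0 ≤ x) (hx1 : x ≤ 1) :
    0 ≤ (1-x^2)*(P' x)^2/L - 2*(1-P x) + K*(1-P x)^2 := by
  have hL0 := S.hL0
  have hP1' : P x ≤ 1 := S.Ple ⟨hx0, hx1⟩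
  have hK0 : (0:ℝ) < K := by linarith
  by_cases h2K : 2/K ≤ 1 - P x
  · have h1 : 0 ≤ (1-x^2)*(P' x)^2/L := by
      apply div_nonneg _ (le_of_lt hL0)
      exact mul_nonneg (by nlinarith) (sq_nonneg (P' x))
    have h2 : 2 ≤ K*(1 - P x) := by
      rw [div_le_iff₀ hK0] at h2K
      nlinarith
    nlinarith
  · push_neg at h2K
    have h3 : 2/K ≤ 1/64 := by
      rw [div_le_div_iff₀ hK0 (by norm_num)]
      linarith
    by_cases hxa : x ≤ 1 - 1/(4*L)
    · exfalso
      have := S.Psmall hx0 hxa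
      have hPle : P x ≤ 1 - 1/64 := by nlinarith
      linarith
    · push_neg at hxa
      exact S.Acore hKD (le_of_lt hxa) hx1

lemma main_lower {x : ℝ} (hx0 : 0 ≤ x) (hx1 : x ≤ 1) : -(1 - 1/64) ≤ P x := by
  by_cases hxa : x ≤ 1 - 1/(4*L)
  · have := S.Psmall hx0 hxa
    nlinarith
  · push_neg at hxa
    have := S.Pge_half (le_of_lt hxa) hx1
    linarith

end Setup

lemma gegen_parity (lam : ℝ) (n : ℕ) (x : ℝ) :
    gegenbauerC lam n (-x) = (-1)^n * gegenbauerC lam n x := by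
  rw [gegen_eq, gegen_eq, Finset.mul_sum]
  apply Finset.sum_congr rfl
  intro k hk
  have hk' : 2*k ≤ n := by
    have := Finset.mem_range.mp hk
    have := Nat.div_mul_le_self n 2
    omega
  have h1 : (2*(-x)) = -(2*x) := by ring
  rw [h1, neg_pow]
  have h2 : ((-1:ℝ))^(n-2*k) = (-1)^n := by
    have h3 : n - 2*k + 2*k = n := by omega
    calc ((-1:ℝ))^(n-2*k) = (-1)^(n-2*k) * ((-1:ℝ)^2)^k := by norm_num
      _ = (-1)^(n-2*k) * (-1)^(2*k) := by rw [← pow_mul]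
      _ = (-1)^n := by rw [← pow_add, h3]
  rw [h2]; ring

end CritRad

open CritRad

/-- For each `d ≥ 2` there are `c_d > 0` and `N` such that for all `n ≥ N` and `θ ∈ [0, π]`,
`(1 − P_{n,d}(cos θ))² ≥ c_d (2 − 2 P_{n,d}(cos θ) − (P_{n,d}'(cos θ) sin θ)²/P_{n,d}'(1))`. -/
theorem uniform_lower_bound_critical_radius_Sd (d : ℕ) (hd : 2 ≤ d) :
    ∃ c : ℝ, 0 < c ∧ ∃ N : ℕ, ∀ n : ℕ, N ≤ n → ∀ θ ∈ Set.Icc (0 : ℝ) π,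
      (1 - legendreDim d n (cos θ)) ^ 2 ≥
        c * (2 - 2 * legendreDim d n (cos θ) -
          (deriv (legendreDim d n) (cos θ) * sin θ) ^ 2 / deriv (legendreDim d n) 1) := by
  have hd2 : (2:ℝ) ≤ (d:ℝ) := by exact_mod_cast hd
  have hK128 : (128:ℝ) ≤ max (d:ℝ) 128 := le_max_right _ _
  have hKd : (d:ℝ) ≤ max (d:ℝ) 128 := le_max_left _ _
  have hK0 : (0:ℝ) < max (d:ℝ) 128 := by linarith
  refine ⟨1 / max (d:ℝ) 128, by positivity, 1, ?_⟩
  intro n hn θ hθ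
  have hn1 : (1:ℝ) ≤ (n:ℝ) := by exact_mod_cast hn
  by_cases h0 : gegenbauerC (((d:ℝ)-1)/2) n 1 = 0
  · have hleg : legendreDim d n = fun _ : ℝ => (0:ℝ) := by
      funext y
      show gegenbauerC (((d:ℝ)-1)/2) n y / gegenbauerC (((d:ℝ)-1)/2) n 1 = 0
      rw [h0, div_zero]
    rw [hleg]
    simp only [deriv_const']
    norm_num
    have h2 : ((max (d:ℝ) 128):ℝ)⁻¹ * 2 = 2 / (max (d:ℝ) 128) := by ring
    rw [h2, div_le_one hK0]
    linarith
  · -- main case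
    have hlam : 0 < ((d:ℝ)-1)/2 := by linarith
    have hd0 : (0:ℝ) < (d:ℝ) := by linarith
    set lam : ℝ := ((d:ℝ)-1)/2 with hlamdef
    set c1 : ℝ := gegenbauerC lam n 1 with hc1def
    set L : ℝ := (n:ℝ)*((n:ℝ)+2*lam)/(d:ℝ) with hLdef
    have hL1 : (1:ℝ) ≤ L := by
      rw [hLdef, le_div_iff₀ hd0, hlamdef]
      nlinarith
    have hP : ∀ x, HasDerivAt (legendreDim d n) (gegenD lam n x / c1) x := by
      intro x
      exact (hasDerivAt_gegen lam n x).div_const c1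
    have hP' : ∀ x, HasDerivAt (fun y => gegenD lam n y / c1) (gegenDD lam n x / c1) x := by
      intro x
      exact (hasDerivAt_gegenD lam n x).div_const c1
    have hode : ∀ x, (1 - x^2) * (gegenDD lam n x / c1)
        = (d:ℝ) * x * (gegenD lam n x / c1) - (d:ℝ) * L * (legendreDim d n x) := by
      intro x
      have h := gegen_ode lam hlam n x
      have h2lam : 2*lam+1 = (d:ℝ) := by rw [hlamdef]; ring
      rw [h2lam] at h
      have hlx : legendreDim d n x = gegenbauerC lam n x / c1 := rfl
      have hnum : (1 - x^2) * gegenDD lam n x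
          = (d:ℝ) * x * gegenD lam n x - (↑n*(↑n+2*lam)) * gegenbauerC lam n x := by
        linarith [h]
      have hdl : (d:ℝ) * L = ↑n * (↑n + 2*lam) := by
        rw [hLdef]; field_simp
      calc (1 - x^2) * (gegenDD lam n x / c1) = ((1 - x^2) * gegenDD lam n x)/c1 := by ring
        _ = ((d:ℝ) * x * gegenD lam n x - (↑n*(↑n+2*lam)) * gegenbauerC lam n x)/c1 := by
            rw [hnum]
        _ = (d:ℝ) * x * (gegenD lam n x / c1) - (d:ℝ) * L * (legendreDim d n x) := by
            rw [hlx, ← hdl]; ring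
    have hP1 : legendreDim d n 1 = 1 := by
      show gegenbauerC lam n 1 / c1 = 1
      rw [← hc1def]
      exact div_self h0
    have S : Setup (legendreDim d n) (fun y => gegenD lam n y / c1)
        (fun y => gegenDD lam n y / c1) (d:ℝ) L := ⟨hd2, hL1, hP, hP', hode, hP1⟩
    have hderiv : ∀ z, deriv (legendreDim d n) z = gegenD lam n z / c1 := fun z => (hP z).deriv
    have hpar : ∀ z : ℝ, legendreDim d n (-z) = (-1:ℝ)^n * legendreDim d n z := by
      intro z
      show gegenbauerC lam n (-z) / c1 = (-1:ℝ)^n * (gegenbauerC lam n z / c1)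
      rw [gegen_parity]; ring
    have hDpar : ∀ z : ℝ, gegenD lam n (-z) / c1 = -((-1:ℝ)^n * (gegenD lam n z / c1)) := by
      intro z
      have hneg : HasDerivAt (fun w : ℝ => -w) (-1 : ℝ) z := by
        simpa using (hasDerivAt_id z).fun_neg
      have h1 : HasDerivAt (fun w => legendreDim d n (-w)) ((gegenD lam n (-z) / c1) * (-1)) z :=
        HasDerivAt.comp z (hP (-z)) hneg
      have h2 : (fun w => legendreDim d n (-w)) = fun w => ((-1:ℝ)^n) * legendreDim d n w :=
        funext hpar
      rw [h2] at h1
      have h3 := (hP z).const_mul ((-1:ℝ)^n)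
      have h4 := h1.unique h3
      linarith
    have main : ∀ x : ℝ, -1 ≤ x → x ≤ 1 →
        0 ≤ (1-x^2)*((gegenD lam n x / c1))^2/L - 2*(1-legendreDim d n x)
          + (max (d:ℝ) 128)*(1-legendreDim d n x)^2 := by
      intro x hxm hx1
      rcases le_or_gt 0 x with hx0 | hx0
      · exact S.main_nonneg hKd hK128 hx0 hx1
      · have hyx : -(-x) = x := by ring
        rcases Nat.even_or_odd n with he | ho
        · have h1 : ((-1:ℝ))^n = 1 := he.neg_one_pow
          have hPx : legendreDim d n x = legendreDim d n (-x) := by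
            have := hpar (-x); rw [hyx] at this; rw [this, h1, one_mul]
          have hP'x : (gegenD lam n x / c1)^2 = (gegenD lam n (-x) / c1)^2 := by
            have := hDpar (-x); rw [hyx] at this; rw [this, h1]; ring
          have hA := S.main_nonneg hKd hK128 (x := -x) (by linarith) (by linarith)
          have hsq : (-x)^2 = x^2 := by ring
          rw [hsq, ← hPx, ← hP'x] at hA
          exact hA
        · have h1 : ((-1:ℝ))^n = -1 := ho.neg_one_pow
          have hlow := S.main_lower (x := -x) (by linarith) (by linarith)
          have hPx : legendreDim d n x = -(legendreDim d n (-x)) := by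
            have := hpar (-x); rw [hyx] at this; rw [this, h1]; ring
          have hu : 1 - legendreDim d n x ≥ 1/64 := by
            rw [hPx]; linarith
          have hs : 0 ≤ (1-x^2)*((gegenD lam n x / c1))^2/L := by
            apply div_nonneg _ (le_of_lt S.hL0)
            exact mul_nonneg (by nlinarith) (sq_nonneg _)
          nlinarith [hu, hK128, sq_nonneg (1 - legendreDim d n x)]
    -- finish
    have hPD1 : gegenD lam n 1 / c1 = L := S.PD1
    rw [hderiv, hderiv, hPD1]
    have hx1 : cos θ ≤ 1 := Real.cos_le_one θ
    have hxm1 : -1 ≤ cos θ := Real.neg_one_le_cos θ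
    have hsin : (sin θ)^2 = 1 - (cos θ)^2 := Real.sin_sq θ
    have hA := main (cos θ) hxm1 hx1
    have hs' : (gegenD lam n (cos θ) / c1 * sin θ)^2
        = (1 - (cos θ)^2) * (gegenD lam n (cos θ) / c1)^2 := by
      rw [mul_pow, hsin]; ring
    rw [hs']
    have h5 : 2 - 2*legendreDim d n (cos θ)
          - (1 - (cos θ)^2) * (gegenD lam n (cos θ) / c1)^2 / L
        ≤ (max (d:ℝ) 128) * (1 - legendreDim d n (cos θ))^2 := by
      linarith [hA]
    have h6 := mul_le_mul_of_nonneg_left h5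
      (le_of_lt (by positivity : (0:ℝ) < 1/(max (d:ℝ) 128)))
    have h7 : (1/(max (d:ℝ) 128)) * ((max (d:ℝ) 128) * (1 - legendreDim d n (cos θ))^2)
        = (1 - legendreDim d n (cos θ))^2 := by
      field_simp
    rw [h7] at h6
    exact h6
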